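/- If a composition c cannot be written in the form c = x y x for compositions x, y (with x nonempty), then two distinct occurrences of c as consecutive blocks within any composition a cannot overlap. -/

import Mathlib

/-- An occurrence of `c` as a consecutive block in `a` at position `i`. -/
def OccursAt (c a : List ℕ) (i : ℕ) : Prop :=
  i + c.length ≤ a.length ∧ (a.drop i).take c.length = c

lemma border_xyx (c : List ℕ) : ∀ b, 0 < b → b < c.length →
    (∀ j, j < b → (c)[j]? = (c)[c.length - b + j]?) →
    ∃ x y : List ℕ, x ≠ [] ∧ c = x ++ y ++ x := by
  intro b
  induction b using Nat.strong_induction_on with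
  | _ b ih =>
    intro hb hbm hbord
    set m := c.length with hm
    by_cases h2 : 2 * b ≤ m
    · refine ⟨c.take b, (c.drop b).take (m - 2 * b), ?_, ?_⟩
      · intro hx
        have hl : (c.take b).length = b := by rw [List.length_take]; omega
        rw [hx] at hl
        simp at hl
        omega
      · have hdrop : c.drop (m - b) = c.take b := by
          apply List.ext_getElem?
          intro j
          by_cases hj : j < b
          · rw [List.getElem?_drop, List.getElem?_take_of_lt hj]
            exact (hbord j hj).symm
          · have h1 : (c.drop (m - b))[j]? = none := by
              apply List.getElem?_eq_none_iff.mpr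
              simp [hm]; omega
            have h2 : (c.take b)[j]? = none := by
              apply List.getElem?_eq_none_iff.mpr
              simp [hm]; omega
            rw [h1, h2]
        have hsplit : c = c.take (m - b) ++ c.drop (m - b) := (List.take_append_drop _ _).symm
        have hmb : m - b = b + (m - 2 * b) := by omega
        rw [hmb, List.take_add, ← hmb, hdrop] at hsplit
        simpa [List.append_assoc] using hsplit
    · push_neg at h2
      have hb' : 0 < 2 * b - m := by omega
      have hlt : 2 * b - m < b := by omega
      apply ih (2 * b - m) hlt hb' (by omega)
      intro j hj
      have e1 : (c)[j]? = (c)[m - b + j]? := hbord j (by omega)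
      have e2 : (c)[m - b + j]? = (c)[m - b + (m - b + j)]? := hbord _ (by omega)
      rw [e1, e2]
      congr 1
      omega

/-- If a composition `c` cannot be written as `x ++ y ++ x` with `x` nonempty,
then two distinct occurrences of `c` in any composition `a` cannot overlap. -/
theorem occurrences_cannot_overlap (c : List ℕ)
    (h : ¬ ∃ x y : List ℕ, x ≠ [] ∧ c = x ++ y ++ x) :
    ∀ (a : List ℕ) (i i' : ℕ), OccursAt c a i → OccursAt c a i' → i < i' →
      i + c.length ≤ i' := by
  intro a i i' hi hi' hlt
  by_contra hcon
  push_neg at hcon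
  set m := c.length with hm
  obtain ⟨hle, heq⟩ := hi
  obtain ⟨hle', heq'⟩ := hi'
  have key : ∀ (k j : ℕ), j < m → (k + m ≤ a.length) → ((a.drop k).take m = c) →
      (c)[j]? = a[k + j]? := by
    intro k j hj hk htk
    rw [← htk, List.getElem?_take_of_lt hj, List.getElem?_drop]
  have hd : 0 < i' - i := by omega
  have hdm : i' - i < m := by omega
  apply h
  apply border_xyx c (m - (i' - i)) (by omega) (by omega)
  intro j hj
  have e1 : (c)[j]? = a[i' + j]? := key i' j (by omega) hle' heq'
  have e2 : (c)[m - (m - (i' - i)) + j]? = a[i + (m - (m - (i' - i)) + j)]? :=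
    key i _ (by omega) hle heq
  rw [e1, e2]
  congr 1
  omega
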